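/- Let v_1, …, v_r ∈ ℤ^d be nonzero vectors whose set of nonnegative real combinations σ = {Σ λ_i v_i : λ_i ≥ 0} is a salient and full-dimensional convex cone in ℝ^d, and let ν: ℤ^r → ℤ^d be the homomorphism with ν(e_i) = v_i for the standard basis e_1, …, e_r of ℤ^r. Let P = {u ∈ Hom(ℤ^d, ℤ) : u(x) ≥ 0 for all x ∈ σ} and F = {φ ∈ Hom(ℤ^r, ℤ) : φ(e_i) ≥ 0 for all i}. Then for every φ ∈ F there exists φ' ∈ F such that φ + φ' lies in the image of P under the dual map ν*: Hom(ℤ^d, ℤ) → Hom(ℤ^r, ℤ), u ↦ u∘ν. -/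

import Mathlib

/-- For a salient full-dimensional cone `σ` generated by nonzero integer
vectors `v₁, …, v_r`, every `φ` in the dual monoid `F` of the positive orthant admits
`φ' ∈ F` with `φ + φ'` in the image of `P = σ^∨ ∩ M` under `ν*`. -/
theorem stmt0 (d r : ℕ)
    (v : Fin r → Fin d → ℤ) (hv : ∀ i, v i ≠ 0)
    (σ : Set (Fin d → ℝ))
    (hσ : σ = {x | ∃ c : Fin r → ℝ, (∀ i, 0 ≤ c i) ∧
      x = ∑ i, c i • (fun j => (v i j : ℝ))})
    (hsalient : ∀ x ∈ σ, -x ∈ σ → x = 0)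
    (hfull : Submodule.span ℝ σ = ⊤)
    (ν : (Fin r → ℤ) →ₗ[ℤ] (Fin d → ℤ))
    (hν : ∀ i, ν (Pi.single i 1) = v i)
    (P : Set ((Fin d → ℤ) →ₗ[ℤ] ℤ))
    (hP : P = {u | ∀ x ∈ σ, 0 ≤ ∑ j, (u (Pi.single j 1) : ℝ) * x j})
    (F : Set ((Fin r → ℤ) →ₗ[ℤ] ℤ))
    (hF : F = {φ | ∀ i, 0 ≤ φ (Pi.single i 1)}) :
    ∀ φ ∈ F, ∃ φ' ∈ F, ∃ u ∈ P, φ + φ' = u.comp ν := by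
  intro φ hφ
  classical
  set w : Fin r → (Fin d → ℝ) := fun i j => (v i j : ℝ) with hw
  -- each generator lies in σ
  have hwσ : ∀ i, w i ∈ σ := by
    intro i
    rw [hσ]
    refine ⟨fun k => if k = i then 1 else 0, fun k => by positivity, ?_⟩
    show w i = _
    rw [show (∑ k, (if k = i then (1:ℝ) else 0) • (fun j => (v k j : ℝ)))
        = ∑ k, (if k = i then w k else 0) from Finset.sum_congr rfl fun k _ => by
          by_cases h : k = i <;> simp [h] <;> rfl]
    simp [Finset.sum_ite_eq']
  -- 0 is not in the convex hull of the generators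
  have h0 : (0 : Fin d → ℝ) ∉ convexHull ℝ (Set.range w) := by
    intro hmem
    rw [convexHull_range_eq_exists_affineCombination] at hmem
    obtain ⟨s, c, hc0, hc1, hcomb⟩ := hmem
    rw [Finset.affineCombination_eq_linear_combination s w c hc1] at hcomb
    have hex : ∃ i0 ∈ s, 0 < c i0 := by
      by_contra h
      push_neg at h
      have : ∑ i ∈ s, c i = 0 :=
        Finset.sum_eq_zero fun i hi => le_antisymm (h i hi) (hc0 i hi)
      rw [hc1] at this; norm_num at this
    obtain ⟨i0, hi0s, hi0⟩ := hex
    have herase : ∑ i ∈ s.erase i0, c i • w i = -(c i0 • w i0) := by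
      have h1 := Finset.add_sum_erase s (fun i => c i • w i) hi0s
      rw [hcomb] at h1
      exact eq_neg_of_add_eq_zero_right h1
    -- -w i0 ∈ σ
    set c' : Fin r → ℝ := fun i => (if i ∈ s.erase i0 then c i else 0) / c i0 with hc'
    have hc'0 : ∀ i, 0 ≤ c' i := by
      intro i
      show 0 ≤ (if i ∈ s.erase i0 then c i else 0) / c i0
      by_cases h : i ∈ s.erase i0
      · rw [if_pos h]
        exact div_nonneg (hc0 i (Finset.mem_of_mem_erase h)) hi0.le
      · rw [if_neg h, zero_div]
    have hsum : ∑ i, c' i • w i = -w i0 := by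
      have h1 : ∀ i, c' i • w i
          = (c i0)⁻¹ • (if i ∈ s.erase i0 then c i • w i else 0) := by
        intro i
        show ((if i ∈ s.erase i0 then c i else 0) / c i0) • w i = _
        by_cases h : i ∈ s.erase i0
        · rw [if_pos h, if_pos h, div_eq_inv_mul, mul_smul]
        · rw [if_neg h, if_neg h, zero_div, zero_smul, smul_zero]
      rw [Finset.sum_congr rfl fun i _ => h1 i, ← Finset.smul_sum,
        Finset.sum_ite_mem, Finset.univ_inter, herase, smul_neg, smul_smul,
        inv_mul_cancel₀ hi0.ne', one_smul]
    have hmem' : -w i0 ∈ σ := by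
      rw [hσ]
      exact ⟨c', hc'0, by rw [← hsum]⟩
    have hz : w i0 = 0 := hsalient _ (hwσ i0) hmem'
    apply hv i0
    funext j
    have h1 : (v i0 j : ℝ) = 0 := by simpa [hw] using congrFun hz j
    show v i0 j = 0
    exact_mod_cast h1
  -- separate 0 from the convex hull
  obtain ⟨f, u, hfu, hub⟩ := geometric_hahn_banach_point_closed
    (convex_convexHull ℝ _) ((Set.finite_range w).isCompact_convexHull (𝕜 := ℝ)).isClosed h0
  have hu : 0 < u := by simpa using hfu
  have hfw : ∀ i, u < f (w i) := fun i =>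
    hub _ (subset_convexHull ℝ _ (Set.mem_range_self i))
  set y : Fin d → ℝ := fun j => f (Pi.single j 1) with hy
  have hfx : ∀ x : Fin d → ℝ, f x = ∑ j, x j * y j := by
    intro x
    conv_lhs => rw [← Finset.univ_sum_single x]
    rw [map_sum]
    refine Finset.sum_congr rfl fun j _ => ?_
    have : Pi.single j (x j) = x j • (Pi.single j (1:ℝ) : Fin d → ℝ) := by
      rw [← Pi.single_smul, smul_eq_mul, mul_one]
    rw [this, map_smul, smul_eq_mul]
  -- bound and scaling
  set B : ℝ := ∑ i, ∑ j, |(v i j : ℝ)| with hB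
  have hBi : ∀ i, ∑ j, |(v i j : ℝ)| ≤ B := by
    intro i
    exact Finset.single_le_sum (f := fun i => ∑ j, |(v i j : ℝ)|)
      (fun k _ => Finset.sum_nonneg fun j _ => abs_nonneg _) (Finset.mem_univ i)
  obtain ⟨N, hN⟩ := exists_nat_gt (B / u)
  have hNu : B < N * u := by
    rwa [div_lt_iff₀ hu] at hN
  set n : Fin d → ℤ := fun j => ⌈(N : ℝ) * y j⌉ with hn
  set m : Fin r → ℤ := fun i => ∑ j, n j * v i j with hm
  have hmr : ∀ i, (m i : ℝ) = ∑ j, (n j : ℝ) * (v i j : ℝ) := by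
    intro i; rw [hm]; push_cast; ring_nf
  have hm1 : ∀ i, 1 ≤ m i := by
    intro i
    have hterm : ∀ j, (N : ℝ) * y j * v i j - |(v i j : ℝ)| ≤ (n j : ℝ) * v i j := by
      intro j
      have h1 : (N : ℝ) * y j ≤ n j := Int.le_ceil _
      have h2 : (n j : ℝ) < N * y j + 1 := Int.ceil_lt_add_one _
      rcases le_or_gt 0 ((v i j : ℝ)) with h | h
      · nlinarith [abs_of_nonneg h]
      · nlinarith [abs_of_neg h]
    have hsum : ∑ j, ((N : ℝ) * y j * v i j) - ∑ j, |(v i j : ℝ)|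
        ≤ ∑ j, (n j : ℝ) * v i j := by
      rw [← Finset.sum_sub_distrib]
      exact Finset.sum_le_sum fun j _ => hterm j
    have hfwi : f (w i) = ∑ j, (v i j : ℝ) * y j := hfx (w i)
    have hNf : ∑ j, ((N : ℝ) * y j * v i j) = N * f (w i) := by
      rw [hfwi, Finset.mul_sum]
      exact Finset.sum_congr rfl fun j _ => by ring
    have hNuf : (N : ℝ) * u ≤ N * f (w i) :=
      mul_le_mul_of_nonneg_left (hfw i).le (Nat.cast_nonneg N)
    have hpos : (0 : ℝ) < ∑ j, (n j : ℝ) * v i j := by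
      have := hBi i
      linarith [hNf ▸ hsum]
    have : (0 : ℝ) < (m i : ℝ) := by rw [hmr i]; exact hpos
    have : 0 < m i := by exact_mod_cast this
    omega
  -- the integer linear functional
  set u₀ : (Fin d → ℤ) →ₗ[ℤ] ℤ := ∑ j, n j • LinearMap.proj j with hu₀def
  have hu₀ : ∀ x : Fin d → ℤ, u₀ x = ∑ j, n j * x j := by
    intro x
    simp [hu₀def, LinearMap.sum_apply, LinearMap.smul_apply, smul_eq_mul]
  have hu₀v : ∀ i, u₀ (v i) = m i := by
    intro i; rw [hu₀ (v i), hm]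
  have hu₀e : ∀ j, u₀ (Pi.single j 1) = n j := by
    intro j
    rw [hu₀]
    rw [show (∑ k, n k * (Pi.single j 1 : Fin d → ℤ) k)
        = ∑ k, (if k = j then n k else 0) from Finset.sum_congr rfl fun k _ => by
          by_cases h : k = j <;> simp [Pi.single_apply, h]]
    simp [Finset.sum_ite_eq']
  -- scaling constant
  set K : ℕ := ∑ i, (φ (Pi.single i 1)).toNat with hK
  have hφ0 : ∀ i, 0 ≤ φ (Pi.single i 1) := by rw [hF] at hφ; exact hφ
  have hKi : ∀ i, φ (Pi.single i 1) ≤ (K : ℤ) := by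
    intro i
    have h1 : (φ (Pi.single i 1)).toNat ≤ K :=
      Finset.single_le_sum (f := fun i => (φ (Pi.single i 1)).toNat)
        (fun _ _ => Nat.zero_le _) (Finset.mem_univ i)
    have h2 : φ (Pi.single i 1) = ((φ (Pi.single i 1)).toNat : ℤ) :=
      (Int.toNat_of_nonneg (hφ0 i)).symm
    rw [h2]; exact_mod_cast h1
  set U : (Fin d → ℤ) →ₗ[ℤ] ℤ := (K : ℤ) • u₀ with hU
  have hUe : ∀ j, U (Pi.single j 1) = (K : ℤ) * n j := by
    intro j; rw [hU, LinearMap.smul_apply, hu₀e j, smul_eq_mul]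
  have hUv : ∀ i, U (v i) = (K : ℤ) * m i := by
    intro i; rw [hU, LinearMap.smul_apply, hu₀v i, smul_eq_mul]
  refine ⟨U.comp ν - φ, ?_, U, ?_, by abel⟩
  · -- φ' ∈ F
    rw [hF]
    intro i
    have h1 : (U.comp ν - φ) (Pi.single i 1) = (K : ℤ) * m i - φ (Pi.single i 1) := by
      rw [LinearMap.sub_apply, LinearMap.comp_apply, hν i, hUv i]
    rw [h1]
    have h2 : (K : ℤ) ≤ (K : ℤ) * m i :=
      le_mul_of_one_le_right (by positivity) (hm1 i)
    linarith [hKi i]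
  · -- U ∈ P
    rw [hP]
    intro x hx
    rw [hσ] at hx
    obtain ⟨c, hc, rfl⟩ := hx
    have hxj : ∀ j, (∑ i, c i • (fun j => (v i j : ℝ))) j = ∑ i, c i * (v i j : ℝ) := by
      intro j; simp [Finset.sum_apply]
    calc (0:ℝ) ≤ ∑ i, c i * ((K : ℝ) * (m i : ℝ)) := by
          refine Finset.sum_nonneg fun i _ => mul_nonneg (hc i) (mul_nonneg (by positivity) ?_)
          have := hm1 i
          exact_mod_cast (by omega : (0:ℤ) ≤ m i)
      _ = ∑ i, ∑ j, ((K : ℤ) * n j : ℤ) * (c i * (v i j : ℝ)) := by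
          refine Finset.sum_congr rfl fun i _ => ?_
          rw [hmr i, Finset.mul_sum, Finset.mul_sum]
          refine Finset.sum_congr rfl fun j _ => ?_
          push_cast; ring
      _ = ∑ j, ∑ i, ((K : ℤ) * n j : ℤ) * (c i * (v i j : ℝ)) := Finset.sum_comm
      _ = ∑ j, ((U (Pi.single j 1) : ℤ) : ℝ) * (∑ i, c i • (fun j => (v i j : ℝ))) j := by
          refine Finset.sum_congr rfl fun j _ => ?_
          rw [hUe j, hxj j, Finset.mul_sum]
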